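/- Let X be a finite set and 𝓗 a family of subsets of X. Let 𝓗* be the set of maximal elements of 𝓗 under inclusion. If a graph Q' on vertex set 𝓗* has the property that for every K in a family 𝓚 of subsets of X, the set {H ∈ 𝓗* : H ∩ K ≠ ∅} induces a connected subgraph of Q', then the graph Q on vertex set 𝓗 obtained from Q' by attaching each H ∈ 𝓗 \ 𝓗* as a pendant (degree-one) vertex adjacent to some maximal H' ∈ 𝓗* with H ⊆ H', has the property that for every K ∈ 𝓚, the set {H ∈ 𝓗 : H ∩ K ≠ ∅} induces a connected subgraph of Q. -/

import Mathlib

open scoped ENNReal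

/-- A tree decomposition of a graph `G`: a tree `T` with bags `bag i ⊆ V` such that
every vertex appears in a bag, every edge lies in a bag, and the bags containing a
fixed vertex form a connected subtree. -/
def IsTreeDecomp {V ι : Type} (G : SimpleGraph V) (T : SimpleGraph ι) (bag : ι → Set V) : Prop :=
  T.IsTree ∧ (∀ v, ∃ i, v ∈ bag i) ∧
    (∀ u v, G.Adj u v → ∃ i, u ∈ bag i ∧ v ∈ bag i) ∧
    (∀ v, (T.induce {i | v ∈ bag i}).Connected)

/-- Width of a tree decomposition: (max bag size) − 1. -/
noncomputable def decompWidth {V ι : Type} (bag : ι → Set V) : ℕ∞ :=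
  (⨆ i, (bag i).encard) - 1

/-- Treewidth: the infimum of widths of tree decompositions. -/
noncomputable def treewidth {V : Type} (G : SimpleGraph V) : ℕ∞ :=
  sInf {w : ℕ∞ | ∃ (ι : Type) (T : SimpleGraph ι) (bag : ι → Set V),
    IsTreeDecomp G T bag ∧ w = decompWidth bag}

/-- A family of vertex sets is non-piercing in `G` if every pairwise difference
(when nonempty) induces a connected subgraph of `G`. -/
def NonPiercing {V : Type} (G : SimpleGraph V) (F : Set (Set V)) : Prop :=
  ∀ H ∈ F, ∀ H' ∈ F, (H \ H').Nonempty → (G.induce (H \ H')).Connected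

/-- Outerplanarity via a one-page (circular, non-crossing) layout. -/
def Outerplanar {α : Type} (Q : SimpleGraph α) : Prop :=
  ∃ f : α → ℕ, Function.Injective f ∧
    ∀ a b c d : α, Q.Adj a b → Q.Adj c d →
      ¬ (f a < f c ∧ f c < f b ∧ f b < f d)

/-- `a, b, c` appear in this (clockwise) cyclic order on the cycle `Fin n`. -/
def Cyc3 {n : ℕ} (a b c : Fin n) : Prop :=
  (a < b ∧ b < c) ∨ (b < c ∧ c < a) ∨ (c < a ∧ a < b)

/-- `a, b, c, d` appear in this (clockwise) cyclic order on the cycle `Fin n`. -/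
def Cyc4 {n : ℕ} (a b c d : Fin n) : Prop :=
  (a < b ∧ b < c ∧ c < d) ∨ (b < c ∧ c < d ∧ d < a) ∨
    (c < d ∧ d < a ∧ a < b) ∨ (d < a ∧ a < b ∧ b < c)

/-- Open arc of vertices strictly between `u` and `v` clockwise. -/
def arcO {n : ℕ} (u v : Fin n) : Set (Fin n) := {w | Cyc3 u w v}

/-- Closed arc of vertices from `u` to `v` clockwise (inclusive). -/
def arcC {n : ℕ} (u v : Fin n) : Set (Fin n) := {u} ∪ {v} ∪ {w | Cyc3 u w v}

/-- The cycle system is `axax`-free. -/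
def AxaxFree {n : ℕ} (F : Set (Set (Fin n))) : Prop :=
  ¬ ∃ H ∈ F, ∃ H' ∈ F, ∃ a₁ x₁ a₂ x₂ : Fin n,
    Cyc4 a₁ x₁ a₂ x₂ ∧ a₁ ∈ H \ H' ∧ a₂ ∈ H \ H' ∧ x₁ ∈ H' ∧ x₂ ∈ H'

/-- The cycle system is `abab`-free. -/
def AbabFree {n : ℕ} (F : Set (Set (Fin n))) : Prop :=
  ¬ ∃ H ∈ F, ∃ H' ∈ F, ∃ a₁ b₁ a₂ b₂ : Fin n,
    Cyc4 a₁ b₁ a₂ b₂ ∧ a₁ ∈ H \ H' ∧ a₂ ∈ H \ H' ∧ b₁ ∈ H' \ H ∧ b₂ ∈ H' \ H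

/-- The vertices appearing in bags of the component of `T` minus the edge `{x,y}`
that contains `x` (the `x`-side of the tree decomposition). -/
def sideVerts {V ι : Type} (T : SimpleGraph ι) (bag : ι → Set V) (x y : ι) : Set V :=
  ⋃ i ∈ {i | (T.deleteEdges {s(x, y)}).Reachable x i}, bag i

/-- Adjacency in the `N × N` grid graph. -/
def gridAdj {N : ℕ} (p q : Fin N × Fin N) : Prop :=
  (p.1 = q.1 ∧ (p.2.val + 1 = q.2.val ∨ q.2.val + 1 = p.2.val)) ∨
    (p.2 = q.2 ∧ (p.1.val + 1 = q.1.val ∨ q.1.val + 1 = p.1.val))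

/-- Clockwise distance from `b` to `a` on the cycle `Fin n`. -/
def relpos {n : ℕ} (a b : Fin n) : ℕ := (a.val + n - b.val) % n

/-- Lexicographic comparison on pairs of naturals. -/
def lexLe (p q : ℕ × ℕ) : Prop := p.1 < q.1 ∨ (p.1 = q.1 ∧ p.2 ≤ q.2)

/-- A set of indices forming a (possibly empty) cyclic interval of `Fin m`. -/
def CycInterval {m : ℕ} (S : Set (Fin m)) : Prop := S = ∅ ∨ ∃ i j : Fin m, S = arcC i j

/-- Maximal elements of a family of sets under inclusion. -/
def maxElems {X : Type} (F : Set (Set X)) : Set (Set X) :=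
  {H ∈ F | ∀ H' ∈ F, H ⊆ H' → H = H'}

theorem stmt0 {X : Type} [Finite X] (𝓗 𝓚 : Set (Set X))
    (Q' : SimpleGraph ↥(maxElems 𝓗)) (Q : SimpleGraph ↥𝓗)
    (σ : Set X → Set X)
    (hσ : ∀ H ∈ 𝓗, H ∉ maxElems 𝓗 → σ H ∈ maxElems 𝓗 ∧ H ⊆ σ H)
    (hQ' : ∀ K ∈ 𝓚,
      ({M : ↥(maxElems 𝓗) | ((M : Set X) ∩ K).Nonempty}).Nonempty →
      (Q'.induce {M : ↥(maxElems 𝓗) | ((M : Set X) ∩ K).Nonempty}).Connected)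
    (hQ : ∀ A B : ↥𝓗, Q.Adj A B ↔
      ((∃ hA : (A : Set X) ∈ maxElems 𝓗, ∃ hB : (B : Set X) ∈ maxElems 𝓗,
        Q'.Adj ⟨A, hA⟩ ⟨B, hB⟩) ∨
       ((A : Set X) ∉ maxElems 𝓗 ∧ (B : Set X) = σ (A : Set X)) ∨
       ((B : Set X) ∉ maxElems 𝓗 ∧ (A : Set X) = σ (B : Set X)))) :
    ∀ K ∈ 𝓚, ({H : ↥𝓗 | ((H : Set X) ∩ K).Nonempty}).Nonempty →
      (Q.induce {H : ↥𝓗 | ((H : Set X) ∩ K).Nonempty}).Connected := by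
  intro K hK hne
  classical
  set S' : Set ↥(maxElems 𝓗) := {M : ↥(maxElems 𝓗) | ((M : Set X) ∩ K).Nonempty} with hS'
  set S : Set ↥𝓗 := {H : ↥𝓗 | ((H : Set X) ∩ K).Nonempty} with hSdef
  -- graph hom from induced subgraph on maximal elements into induced subgraph on all
  let f : ↥S' → ↥S := fun M => ⟨⟨(M : ↥(maxElems 𝓗)).1, (M : ↥(maxElems 𝓗)).2.1⟩, M.2⟩
  have fadj : ∀ {M N : ↥S'}, (Q'.induce S').Adj M N → (Q.induce S).Adj (f M) (f N) := by
    intro M N h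
    show Q.Adj _ _
    rw [hQ]
    refine Or.inl ⟨(M : ↥(maxElems 𝓗)).2, (N : ↥(maxElems 𝓗)).2, ?_⟩
    convert h using 2
    exact Iff.rfl
  let φ : Q'.induce S' →g Q.induce S := ⟨f, fadj⟩
  -- every vertex of S is reachable (in induced graph) to some maximal one
  have key : ∀ A : ↥S, ∃ B : ↥S, ((B : ↥𝓗) : Set X) ∈ maxElems 𝓗 ∧
      (Q.induce S).Reachable A B := by
    intro A
    by_cases h : ((A : ↥𝓗) : Set X) ∈ maxElems 𝓗
    · exact ⟨A, h, SimpleGraph.Reachable.refl A⟩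
    · obtain ⟨hmax, hsub2⟩ := hσ _ (A : ↥𝓗).2 h
      have hBK : (σ ((A : ↥𝓗) : Set X) ∩ K).Nonempty :=
        A.2.mono (Set.inter_subset_inter_left K hsub2)
      refine ⟨⟨⟨σ _, hmax.1⟩, hBK⟩, hmax, SimpleGraph.Adj.reachable ?_⟩
      show Q.Adj _ _
      rw [hQ]
      exact Or.inr (Or.inl ⟨h, rfl⟩)
  have hNE : Nonempty ↥S := by
    obtain ⟨H, hH⟩ := hne
    exact ⟨⟨H, hH⟩⟩
  refine ⟨?_⟩
  intro u v
  obtain ⟨Bu, hBu, hru⟩ := key u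
  obtain ⟨Bv, hBv, hrv⟩ := key v
  refine hru.trans (SimpleGraph.Reachable.trans ?_ hrv.symm)
  have hMu : (⟨((Bu : ↥𝓗) : Set X), hBu⟩ : ↥(maxElems 𝓗)) ∈ S' := Bu.2
  have hMv : (⟨((Bv : ↥𝓗) : Set X), hBv⟩ : ↥(maxElems 𝓗)) ∈ S' := Bv.2
  have hconn := hQ' K hK ⟨_, hMu⟩
  have hr := hconn.preconnected ⟨_, hMu⟩ ⟨_, hMv⟩
  have := hr.map φ
  have e1 : φ ⟨_, hMu⟩ = Bu := by
    apply Subtype.ext; apply Subtype.ext; rfl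
  have e2 : φ ⟨_, hMv⟩ = Bv := by
    apply Subtype.ext; apply Subtype.ext; rfl
  rwa [e1, e2] at this
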